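/- Let k ≥ 2 and let n be odd. Then there exists no nega-ℤ_{2^k}-bent function f : 𝔽_{2^n} → ℤ/2^kℤ; that is, for every f : 𝔽_{2^n} → ℤ/2^kℤ there exist u ∈ 𝔽_{2^n} and a nonzero c ∈ ℤ/2^kℤ with |K_f(c,u)|² ≠ 2^n. -/

import Mathlib

noncomputable section

/-- The absolute trace Tr(x) = x + x² + x⁴ + … + x^{2^{n−1}}. -/
def Tr {F : Type} [Field F] (n : ℕ) (x : F) : F :=
  ∑ i ∈ Finset.range n, x ^ (2 ^ i)

/-- σ(c,x) = Σ_{0 ≤ i < j ≤ n−1} (cx)^{2^i} (cx)^{2^j} -/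
def sig {F : Type} [Field F] (n : ℕ) (c x : F) : F :=
  ∑ j ∈ Finset.range n, ∑ i ∈ Finset.range j, (c * x) ^ (2 ^ i) * (c * x) ^ (2 ^ j)

/-- ι(e): the integer lift of e ∈ {0,1} ⊆ F. -/
def iotaN {F : Type} [Field F] [DecidableEq F] (e : F) : ℕ :=
  if e = 1 then 1 else 0

/-- ζ = e^{2πi/2^k}. -/
def zeta (k : ℕ) : ℂ := Complex.exp (2 * Real.pi * Complex.I / 2 ^ k)

/-- c₀ ∈ {0,1} ⊆ F equals 1 if c is odd and 0 if c is even. -/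
def czero {F : Type} [Field F] (k : ℕ) (c : ZMod (2 ^ k)) : F :=
  if c.val % 2 = 1 then 1 else 0

/-- The nega-ℤ_{2^k}-Hadamard transform
K_f(c,u) = Σ_{x ∈ F} (−1)^{ι(Tr(ux)) + ι(σ(c₀,x))} ζ^{c·f(x)} i^{ι(Tr(c₀x))}. -/
def negaK {F : Type} [Field F] [Fintype F] [DecidableEq F] (n k : ℕ)
    (f : F → ZMod (2 ^ k)) (c : ZMod (2 ^ k)) (u : F) : ℂ :=
  ∑ x : F, (-1 : ℂ) ^ (iotaN (Tr n (u * x)) + iotaN (sig n (czero k c) x)) *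
    zeta k ^ (c * f x).val * Complex.I ^ (iotaN (Tr n (czero k c * x)))

lemma zeta_pow_half (k : ℕ) (hk : 1 ≤ k) : zeta k ^ (2 ^ (k - 1)) = -1 := by
  have h2 : (2 : ℂ) ^ k = 2 ^ (k - 1) * 2 := by
    rw [← pow_succ, Nat.sub_add_cancel hk]
  rw [zeta, ← Complex.exp_nat_mul]
  have key : ((2 ^ (k - 1) : ℕ) : ℂ) * (2 * Real.pi * Complex.I / 2 ^ k)
      = Real.pi * Complex.I := by
    have hne : (2 : ℂ) ^ (k - 1) ≠ 0 := pow_ne_zero _ two_ne_zero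
    push_cast
    rw [h2]
    field_simp
  rw [key, Complex.exp_pi_mul_I]

lemma zeta_pow_card (k : ℕ) (hk : 1 ≤ k) : zeta k ^ (2 ^ k) = 1 := by
  have h2 : 2 ^ k = 2 ^ (k - 1) * 2 := by
    rw [← pow_succ, Nat.sub_add_cancel hk]
  rw [h2, pow_mul, zeta_pow_half k hk, neg_one_sq]

lemma zeta_pow_mod (k a : ℕ) (hk : 1 ≤ k) : zeta k ^ (a % 2 ^ k) = zeta k ^ a := by
  conv_rhs => rw [← Nat.div_add_mod a (2 ^ k)]
  rw [pow_add, pow_mul, zeta_pow_card k hk, one_pow, one_mul]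

/-- For k ≥ 2 and odd n there is no nega-ℤ_{2^k}-bent function
f : 𝔽_{2^n} → ℤ/2^kℤ: every f has some u and nonzero c with
|K_f(c,u)|² ≠ 2^n. -/
theorem stmt12 {F : Type} [Field F] [Fintype F] [DecidableEq F] (n k : ℕ)
    (hk : 2 ≤ k) (hn : Odd n) (hF : Fintype.card F = 2 ^ n)
    (f : F → ZMod (2 ^ k)) :
    ∃ u : F, ∃ c : ZMod (2 ^ k), c ≠ 0 ∧
      ‖negaK n k f c u‖ ^ 2 ≠ 2 ^ n := by
  haveI : NeZero (2 ^ k) := ⟨by positivity⟩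
  set c : ZMod (2 ^ k) := ((2 ^ (k - 1) : ℕ) : ZMod (2 ^ k)) with hc
  have hlt : 2 ^ (k - 1) < 2 ^ k := Nat.pow_lt_pow_right one_lt_two (by omega)
  have hval : c.val = 2 ^ (k - 1) := by
    rw [hc, ZMod.val_natCast, Nat.mod_eq_of_lt hlt]
  have hcne : c ≠ 0 := by
    intro h
    have := hval
    rw [h, ZMod.val_zero] at this
    exact (pow_ne_zero (k - 1) (two_ne_zero)) this.symm
  have hczero : czero k c = (0 : F) := by
    unfold czero
    rw [hval]
    have : 2 ^ (k - 1) % 2 = 0 := by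
      have : (2 : ℕ) ∣ 2 ^ (k - 1) := dvd_pow_self 2 (by omega)
      omega
    simp [this]
  refine ⟨0, c, hcne, ?_⟩
  -- compute negaK
  have hTr0 : Tr n (0 : F) = 0 := by
    unfold Tr
    apply Finset.sum_eq_zero
    intro i _
    exact zero_pow (pow_ne_zero i two_ne_zero)
  have hiota0 : iotaN (0 : F) = 0 := by
    unfold iotaN
    simp [zero_ne_one]
  have hsig0 : ∀ x : F, sig n (0 : F) x = 0 := by
    intro x
    unfold sig
    apply Finset.sum_eq_zero
    intro j _
    apply Finset.sum_eq_zero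
    intro i _
    rw [zero_mul, zero_pow (pow_ne_zero i two_ne_zero), zero_mul]
  -- zeta k ^ (c * f x).val = (-1) ^ (f x).val
  have hterm : ∀ x : F, zeta k ^ (c * f x).val = (-1 : ℂ) ^ (f x).val := by
    intro x
    have h1 : c * f x = ((2 ^ (k - 1) * (f x).val : ℕ) : ZMod (2 ^ k)) := by
      rw [Nat.cast_mul, ← hc, ZMod.natCast_val, ZMod.cast_id]
    have hv : (c * f x).val = (2 ^ (k - 1) * (f x).val) % 2 ^ k := by
      rw [h1, ZMod.val_natCast]
    rw [hv, zeta_pow_mod k _ (by omega), pow_mul, zeta_pow_half k (by omega)]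
  have hK : negaK n k f c 0 = ((∑ x : F, (-1 : ℤ) ^ (f x).val : ℤ) : ℂ) := by
    unfold negaK
    push_cast
    apply Finset.sum_congr rfl
    intro x _
    rw [hczero, zero_mul, hTr0, hiota0, hsig0, hiota0, hterm]
    simp
  rw [hK]
  set S : ℤ := ∑ x : F, (-1 : ℤ) ^ (f x).val with hS
  rw [Complex.norm_intCast]
  intro habs
  have h1 : (S : ℝ) ^ 2 = (2 : ℝ) ^ n := by
    rw [← habs]; rw [sq_abs]
  have h2 : (S ^ 2 : ℤ) = 2 ^ n := by
    have := h1
    push_cast at this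
    exact_mod_cast this
  -- pass to ℕ
  have h3 : S.natAbs ^ 2 = 2 ^ n := by
    have := congrArg Int.natAbs h2
    simpa [Int.natAbs_pow] using this
  have hane : S.natAbs ≠ 0 := by
    intro h
    rw [h] at h3
    simp at h3
    exact absurd h3.symm (pow_ne_zero n two_ne_zero)
  have hfact : (S.natAbs ^ 2).factorization 2 = 2 * S.natAbs.factorization 2 := by
    rw [Nat.factorization_pow]; simp [mul_comm]
  have hfact2 : ((2 : ℕ) ^ n).factorization 2 = n := by
    rw [Nat.Prime.factorization_pow Nat.prime_two]; simp
  rw [h3, hfact2] at hfact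
  obtain ⟨t, ht⟩ := hn
  omega
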